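/- Let p be a prime with p ≥ 11 and let k₁, k₂ be integers with k₁ ≥ 0.4(p-1), k₂ ≥ 0.4(p-1), and k₁ + k₂ < p - 1. Let I = {n mod p : -k₁ ≤ n ≤ k₂}. Then for every x ∈ 𝔽_p, at least one of 2x or 2⁻¹x belongs to I. -/
import Mathlib


open Finset

/-- For p ≥ 11 and k₁, k₂ ≥ 0.4(p-1) with k₁ + k₂ < p - 1, every x ∈ 𝔽_p has
2x ∈ I or 2⁻¹x ∈ I, where I is the image of [-k₁, k₂]. -/
theorem double_or_half_in_interval
    (p : ℕ) [Fact p.Prime] (hp : 11 ≤ p)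
    (k₁ k₂ : ℤ)
    (hk₁ : (0.4 : ℚ) * ((p : ℚ) - 1) ≤ (k₁ : ℚ))
    (hk₂ : (0.4 : ℚ) * ((p : ℚ) - 1) ≤ (k₂ : ℚ))
    (hk : k₁ + k₂ < (p : ℤ) - 1)
    (I : Finset (ZMod p))
    (hI : I = (Finset.Icc (-k₁) k₂).image (fun n : ℤ => (n : ZMod p))) :
    ∀ x : ZMod p, 2 * x ∈ I ∨ (2 : ZMod p)⁻¹ * x ∈ I := by
  intro x
  have hprime : p.Prime := Fact.out
  have hodd : p % 2 = 1 := Nat.odd_iff.mp (hprime.odd_of_ne_two (by omega))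
  have ha : 2 * ((p:ℤ) - 1) ≤ 5 * k₁ := by
    have h : (2:ℚ) * ((p:ℚ) - 1) ≤ 5 * (k₁ : ℚ) := by linarith
    exact_mod_cast h
  have hb : 2 * ((p:ℤ) - 1) ≤ 5 * k₂ := by
    have h : (2:ℚ) * ((p:ℚ) - 1) ≤ 5 * (k₂ : ℚ) := by linarith
    exact_mod_cast h
  have h2 : (2 : ZMod p) ≠ 0 := by
    intro h
    have h' : ((2:ℕ) : ZMod p) = 0 := by exact_mod_cast h
    have hd := (ZMod.natCast_eq_zero_iff 2 p).mp h'
    have := Nat.le_of_dvd (by norm_num) hd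
    omega
  set M := x.valMinAbs with hMdef
  have hMx : (M : ZMod p) = x := x.coe_valMinAbs
  have hMle : M.natAbs ≤ p / 2 := x.natAbs_valMinAbs_le
  have memI : ∀ n : ℤ, -k₁ ≤ n → n ≤ k₂ → ∀ y : ZMod p, (n : ZMod p) = y → y ∈ I := by
    intro n h1 h2' y hy
    rw [hI, Finset.mem_image]
    exact ⟨n, Finset.mem_Icc.mpr ⟨h1, h2'⟩, hy⟩
  have half : ∀ n : ℤ, ((2 * n : ℤ) : ZMod p) = x → ((n : ℤ) : ZMod p) = 2⁻¹ * x := by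
    intro n h
    have h' : (2 : ZMod p) * (n : ZMod p) = x := by push_cast at h; exact h
    rw [eq_comm, inv_mul_eq_iff_eq_mul₀ h2]
    exact h'.symm
  rcases le_or_gt (2 * M) k₂ with hB | hB
  · rcases le_or_gt (-k₁) (2 * M) with hA | hA
    · exact Or.inl (memI (2 * M) hA hB _ (by push_cast; rw [hMx]))
    · rcases le_or_gt (2 * M) (k₂ - p) with h1 | h1
      · refine Or.inl (memI (2 * M + p) (by omega) (by omega) _ ?_)
        push_cast
        rw [hMx, ZMod.natCast_self]
        ring
      · right
        rcases Int.even_or_odd M with ⟨t, ht⟩ | ⟨t, ht⟩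
        · refine memI t (by omega) (by omega) _ (half t ?_)
          rw [show (2 * t : ℤ) = M by omega, hMx]
        · obtain ⟨s, hs⟩ : ∃ s, M + p = 2 * s := ⟨(M + p) / 2, by omega⟩
          refine memI s (by omega) (by omega) _ (half s ?_)
          rw [show (2 * s : ℤ) = M + p from hs.symm]
          push_cast
          rw [hMx, ZMod.natCast_self]
          ring
  · rcases le_or_gt ((p : ℤ) - k₁) (2 * M) with h1 | h1
    · refine Or.inl (memI (2 * M - p) (by omega) (by omega) _ ?_)
      push_cast
      rw [hMx, ZMod.natCast_self]
      ring
    · right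
      rcases Int.even_or_odd M with ⟨t, ht⟩ | ⟨t, ht⟩
      · refine memI t (by omega) (by omega) _ (half t ?_)
        rw [show (2 * t : ℤ) = M by omega, hMx]
      · obtain ⟨s, hs⟩ : ∃ s, M - p = 2 * s := ⟨(M - p) / 2, by omega⟩
        refine memI s (by omega) (by omega) _ (half s ?_)
        rw [show (2 * s : ℤ) = M - p from hs.symm]
        push_cast
        rw [hMx, ZMod.natCast_self]
        ring
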